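/- Let G = (V, E) be a finite directed graph with no self-loops and let z = (x, a⁺, a⁻) ∈ ℤ^V × ℤ^E × ℤ^E satisfy x_u − x_v = a⁺_{(u,v)} − a⁻_{(u,v)} for every (u,v) ∈ E. (i) Suppose x_v > 0 for some v; let c = max{x_v : v ∈ V}, and let S be the vertex set of a connected component of the subgraph induced by {v ∈ V : x_v = c}. Then there exists g = (g_x, g⁺, g⁻) ∈ ℤ^V × ℤ^E × ℤ^E with (g_x)_u − (g_x)_w = g⁺_{(u,w)} − g⁻_{(u,w)} for every (u,w) ∈ E, such that g_x = χ_S and g ⊑ z. (ii) Analogously, if x_v < 0 for some v, c = min{x_v : v ∈ V}, and S is a connected component of {v : x_v = c}, then there exists such a g with g_x = −χ_S and g ⊑ z. -/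

import Mathlib

open scoped Classical

/-- The undirected support graph of the directed edge set `E`. -/
def undirGraph {V : Type*} (E : Finset (V × V)) : SimpleGraph V where
  Adj u v := u ≠ v ∧ ((u, v) ∈ E ∨ (v, u) ∈ E)
  symm := by
    constructor
    intro u v h
    exact ⟨h.1.symm, h.2.elim Or.inr Or.inl⟩
  loopless := by constructor; intro u h; exact h.1 rfl

/-- `S ⊆ V` induces a connected subgraph of the (undirected version of the) graph. -/
def InducesConnected {V : Type*} (E : Finset (V × V)) (S : Set V) : Prop :=
  S.Nonempty ∧ ((undirGraph E).induce S).Connected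

/-- Integer indicator vector of a set of vertices. -/
noncomputable def chiV {V : Type*} (S : Set V) : V → ℤ :=
  S.indicator 1

/-- Integer indicator vector of a set of edges. -/
noncomputable def chiE {V : Type*} {E : Finset (V × V)}
    (T : Set {e : V × V // e ∈ E}) : {e : V × V // e ∈ E} → ℤ :=
  T.indicator 1

/-- Outgoing edges of `S`. -/
def deltaPlus {V : Type*} (E : Finset (V × V)) (S : Set V) :
    Set {e : V × V // e ∈ E} :=
  {e | (e : V × V).1 ∈ S ∧ (e : V × V).2 ∉ S}

/-- Incoming edges of `S`. -/
def deltaMinus {V : Type*} (E : Finset (V × V)) (S : Set V) :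
    Set {e : V × V // e ∈ E} :=
  {e | (e : V × V).1 ∉ S ∧ (e : V × V).2 ∈ S}

/-- The conformal (sign-compatible, coordinatewise) partial order `x ⊑ y`. -/
def Sqle {ι : Type*} (x y : ι → ℤ) : Prop :=
  ∀ i, 0 ≤ x i * y i ∧ |x i| ≤ |y i|

/-- `(x, a)` lies in the integer kernel of `A_TV`. -/
def InKerATV {V : Type*} (E : Finset (V × V)) (x : V → ℤ)
    (a : {e : V × V // e ∈ E} → ℤ) : Prop :=
  ∀ e : {e : V × V // e ∈ E}, x (e : V × V).1 - x (e : V × V).2 = a e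

/-- `(x, a)` is a Graver basis element of `A_TV`: a `⊑`-minimal nonzero
element of the integer kernel. -/
def InGraverATV {V : Type*} (E : Finset (V × V)) (x : V → ℤ)
    (a : {e : V × V // e ∈ E} → ℤ) : Prop :=
  InKerATV E x a ∧ ¬(x = 0 ∧ a = 0) ∧
    ∀ (x' : V → ℤ) (a' : {e : V × V // e ∈ E} → ℤ),
      InKerATV E x' a' → ¬(x' = 0 ∧ a' = 0) → Sqle x' x → Sqle a' a →
        x' = x ∧ a' = a

/-- `(x, a⁺, a⁻)` lies in the integer kernel of `A'_TV`. -/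
def InKerATV' {V : Type*} (E : Finset (V × V)) (x : V → ℤ)
    (ap am : {e : V × V // e ∈ E} → ℤ) : Prop :=
  ∀ e : {e : V × V // e ∈ E}, x (e : V × V).1 - x (e : V × V).2 = ap e - am e

/-- `S` is the vertex set of a connected component of the subgraph induced by
`W`: `S ⊆ W`, `S` induces a connected subgraph, and `S` is maximal with these
properties. -/
def IsConnCompOf {V : Type*} (E : Finset (V × V)) (W S : Set V) : Prop :=
  S ⊆ W ∧ InducesConnected E S ∧
    ∀ S' : Set V, S ⊆ S' → S' ⊆ W → InducesConnected E S' → S' = S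

lemma absorb_adj {V : Type*} (E : Finset (V × V)) {W S : Set V}
    (h : IsConnCompOf E W S) {u v : V} (hu : u ∈ S) (hv : v ∈ W)
    (hadj : (undirGraph E).Adj u v) : v ∈ S := by
  by_contra hvS
  have hconn : InducesConnected E (insert v S) := by
    refine ⟨⟨u, Set.mem_insert_of_mem _ hu⟩, ?_⟩
    let f : (undirGraph E).induce S →g (undirGraph E).induce (insert v S) :=
      ⟨fun w => ⟨w.1, Set.mem_insert_of_mem _ w.2⟩, fun {a b} hab => hab⟩
    have key : ∀ w : (insert v S : Set V),
        ((undirGraph E).induce (insert v S)).Reachable ⟨u, Set.mem_insert_of_mem _ hu⟩ w := by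
      rintro ⟨w, hw⟩
      rcases hw with rfl | hwS
      · exact SimpleGraph.Adj.reachable hadj
      · have hr := (h.2.1.2.preconnected ⟨u, hu⟩ ⟨w, hwS⟩).map f
        have hfu : f ⟨u, hu⟩ = ⟨u, Set.mem_insert_of_mem _ hu⟩ := Subtype.ext rfl
        have hfw : f ⟨w, hwS⟩ = ⟨w, Set.mem_insert_of_mem _ hwS⟩ := Subtype.ext rfl
        rw [hfu, hfw] at hr
        exact hr
    exact ⟨fun a b => (key a).symm.trans (key b)⟩
  have := h.2.2 (insert v S) (Set.subset_insert _ _) (Set.insert_subset hv h.1) hconn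
  exact hvS (this ▸ Set.mem_insert v S)

lemma maxCase {V : Type*} [Fintype V] [DecidableEq V] (E : Finset (V × V))
    (hloop : ∀ e ∈ E, e.1 ≠ e.2)
    (x : V → ℤ) (ap am : {e : V × V // e ∈ E} → ℤ)
    (hker : ∀ e : {e : V × V // e ∈ E}, x (e : V × V).1 - x (e : V × V).2 = ap e - am e)
    (c : ℤ) (S : Set V) (hpos : ∃ v, 0 < x v)
    (hc : IsGreatest (Set.range x) c)
    (hS : IsConnCompOf E {v | x v = c} S) :
    ∃ (gx : V → ℤ) (gp gm : {e : V × V // e ∈ E} → ℤ),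
      (∀ e : {e : V × V // e ∈ E}, gx (e : V × V).1 - gx (e : V × V).2 = gp e - gm e) ∧
      gx = chiV S ∧
      (∀ i, 0 ≤ gx i * x i ∧ |gx i| ≤ |x i|) ∧
      (∀ e, 0 ≤ gp e * ap e ∧ |gp e| ≤ |ap e|) ∧
      (∀ e, 0 ≤ gm e * am e ∧ |gm e| ≤ |am e|) := by
  obtain ⟨v0, hv0⟩ := hpos
  have hc1 : 1 ≤ c := le_trans hv0 (hc.2 ⟨v0, rfl⟩)
  classical
  set gx : V → ℤ := chiV S with hgxdef
  have hgx : ∀ v, gx v = if v ∈ S then 1 else 0 := by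
    intro v; simp [hgxdef, chiV, Set.indicator_apply]
  set gp : {e : V × V // e ∈ E} → ℤ := fun e =>
    if (e : V × V).1 ∈ S ∧ (e : V × V).2 ∉ S then min 1 (max 0 (ap e))
    else if (e : V × V).1 ∉ S ∧ (e : V × V).2 ∈ S then max (-1) (min 0 (ap e))
    else 0 with hgpdef
  set gm : {e : V × V // e ∈ E} → ℤ := fun e =>
    gp e - (gx (e : V × V).1 - gx (e : V × V).2) with hgmdef
  have hSc : ∀ v ∈ S, x v = c := fun v hv => hS.1 hv
  have hub : ∀ v, x v ≤ c := fun v => hc.2 ⟨v, rfl⟩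
  -- edge endpoint bounds
  have hout : ∀ e : {e : V × V // e ∈ E}, (e : V × V).1 ∈ S → (e : V × V).2 ∉ S →
      x (e : V × V).2 ≤ c - 1 := by
    intro e h1 h2
    have hne : x (e : V × V).2 ≠ c := by
      intro hcv
      exact h2 (absorb_adj E hS h1 hcv ⟨hloop e e.2, Or.inl e.2⟩)
    have := hub (e : V × V).2
    omega
  have hin : ∀ e : {e : V × V // e ∈ E}, (e : V × V).2 ∈ S → (e : V × V).1 ∉ S →
      x (e : V × V).1 ≤ c - 1 := by
    intro e h2 h1
    have hne : x (e : V × V).1 ≠ c := by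
      intro hcv
      exact h1 (absorb_adj E hS h2 hcv ⟨(hloop e e.2).symm, Or.inr e.2⟩)
    have := hub (e : V × V).1
    omega
  refine ⟨gx, gp, gm, ?_, rfl, ?_, ?_, ?_⟩
  · intro e; simp only [hgmdef]; ring
  · intro v
    rw [hgx v]
    by_cases hv : v ∈ S
    · have hxv : x v = c := hSc v hv
      simp only [hv, if_pos]
      constructor
      · rw [one_mul, hxv]; omega
      · rw [abs_one]; calc (1 : ℤ) ≤ c := hc1
          _ = x v := hxv.symm
          _ ≤ |x v| := le_abs_self _
    · simp [hv]
  · intro e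
    by_cases h1 : (e : V × V).1 ∈ S <;> by_cases h2 : (e : V × V).2 ∈ S
    · simp [hgpdef, h1, h2]
    · -- out edge
      have hd : 1 ≤ ap e - am e := by
        have := hker e; have := hSc _ h1; have := hout e h1 h2; omega
      have hgpe : gp e = min 1 (max 0 (ap e)) := by simp [hgpdef, h1, h2]
      rcases le_or_gt 1 (ap e) with h | h
      · have : gp e = 1 := by omega
        rw [this, abs_one, one_mul]
        exact ⟨by omega, le_trans h (le_abs_self _)⟩
      · have : gp e = 0 := by omega
        simp [this]
    · -- in edge
      have hd : ap e - am e ≤ -1 := by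
        have := hker e; have := hSc _ h2; have := hin e h2 h1; omega
      have hgpe : gp e = max (-1) (min 0 (ap e)) := by simp [hgpdef, h1, h2]
      rcases le_or_gt (ap e) (-1) with h | h
      · have : gp e = -1 := by omega
        rw [this]
        constructor
        · nlinarith
        · rw [abs_neg, abs_one]
          calc (1 : ℤ) ≤ -(ap e) := by omega
            _ ≤ |ap e| := neg_le_abs _
      · have : gp e = 0 := by omega
        simp [this]
    · simp [hgpdef, h1, h2]
  · intro e
    by_cases h1 : (e : V × V).1 ∈ S <;> by_cases h2 : (e : V × V).2 ∈ S
    · simp [hgmdef, hgpdef, hgx, h1, h2]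
    · -- out edge: gm = gp - 1
      have hd : 1 ≤ ap e - am e := by
        have := hker e; have := hSc _ h1; have := hout e h1 h2; omega
      have hgpe : gp e = min 1 (max 0 (ap e)) := by simp [hgpdef, h1, h2]
      have hgme : gm e = gp e - 1 := by simp [hgmdef, hgx, h1, h2]
      rcases le_or_gt 1 (ap e) with h | h
      · have : gm e = 0 := by omega
        simp [this]
      · have ham : am e ≤ -1 := by omega
        have : gm e = -1 := by omega
        rw [this]
        constructor
        · nlinarith
        · rw [abs_neg, abs_one]
          calc (1 : ℤ) ≤ -(am e) := by omega
            _ ≤ |am e| := neg_le_abs _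
    · -- in edge: gm = gp + 1
      have hd : ap e - am e ≤ -1 := by
        have := hker e; have := hSc _ h2; have := hin e h2 h1; omega
      have hgpe : gp e = max (-1) (min 0 (ap e)) := by simp [hgpdef, h1, h2]
      have hgme : gm e = gp e + 1 := by simp [hgmdef, hgx, h1, h2]
      rcases le_or_gt (ap e) (-1) with h | h
      · have : gm e = 0 := by omega
        simp [this]
      · have ham : 1 ≤ am e := by omega
        have : gm e = 1 := by omega
        rw [this, one_mul, abs_one]
        exact ⟨by omega, le_trans ham (le_abs_self _)⟩
    · simp [hgmdef, hgpdef, hgx, h1, h2]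

/-- If `z = (x, a⁺, a⁻)` lies in the integer kernel of
`A'_TV`, `c` is the maximum value of `x` (positive somewhere), and `S` is a
connected component of the level set `{v : x_v = c}`, then there is an element
`g` of the integer kernel with vertex part `χ_S` and `g ⊑ z`; analogously for
the minimum (negative) value with vertex part `−χ_S`. -/
theorem level_set_component_majorized_ATV'
    {V : Type*} [Fintype V] [DecidableEq V] (E : Finset (V × V))
    (hloop : ∀ e ∈ E, e.1 ≠ e.2)
    (x : V → ℤ) (ap am : {e : V × V // e ∈ E} → ℤ)
    (hker : InKerATV' E x ap am) :
    (∀ (c : ℤ) (S : Set V), (∃ v, 0 < x v) →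
      IsGreatest (Set.range x) c →
      IsConnCompOf E {v | x v = c} S →
      ∃ (gx : V → ℤ) (gp gm : {e : V × V // e ∈ E} → ℤ),
        InKerATV' E gx gp gm ∧ gx = chiV S ∧
        Sqle gx x ∧ Sqle gp ap ∧ Sqle gm am) ∧
    (∀ (c : ℤ) (S : Set V), (∃ v, x v < 0) →
      IsLeast (Set.range x) c →
      IsConnCompOf E {v | x v = c} S →
      ∃ (gx : V → ℤ) (gp gm : {e : V × V // e ∈ E} → ℤ),
        InKerATV' E gx gp gm ∧ gx = -chiV S ∧
        Sqle gx x ∧ Sqle gp ap ∧ Sqle gm am) := by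
  constructor
  · intro c S hpos hc hS
    obtain ⟨gx, gp, gm, h1, h2, h3, h4, h5⟩ :=
      maxCase E hloop x ap am hker c S hpos hc hS
    exact ⟨gx, gp, gm, h1, h2, h3, h4, h5⟩
  · intro c S hneg hc hS
    have hker' : ∀ e : {e : V × V // e ∈ E},
        (fun v => -x v) (e : V × V).1 - (fun v => -x v) (e : V × V).2 =
          (fun e => -ap e) e - (fun e => -am e) e := by
      intro e; have := hker e; simp only; omega
    have hpos' : ∃ v, 0 < -x v := by obtain ⟨v, hv⟩ := hneg; exact ⟨v, by omega⟩
    have hc' : IsGreatest (Set.range (fun v => -x v)) (-c) := by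
      constructor
      · obtain ⟨v, hv⟩ := hc.1
        exact ⟨v, by simp [hv]⟩
      · rintro y ⟨v, rfl⟩
        have := hc.2 ⟨v, rfl⟩
        simp only
        omega
    have hS' : IsConnCompOf E {v | -x v = -c} S := by
      have : {v | -x v = -c} = {v | x v = c} := by ext v; simp [neg_eq_iff_eq_neg]
      rw [this]; exact hS
    obtain ⟨gx, gp, gm, h1, h2, h3, h4, h5⟩ :=
      maxCase E hloop (fun v => -x v) (fun e => -ap e) (fun e => -am e) hker'
        (-c) S hpos' hc' hS'
    refine ⟨-gx, -gp, -gm, ?_, by rw [h2], ?_, ?_, ?_⟩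
    · intro e; have := h1 e; simp only [Pi.neg_apply]; omega
    · intro i
      obtain ⟨ha, hb⟩ := h3 i
      refine ⟨?_, ?_⟩
      · have : (-gx) i * x i = gx i * (-x i) := by simp only [Pi.neg_apply]; ring
        rw [this]; exact ha
      · simpa [abs_neg] using hb
    · intro e
      obtain ⟨ha, hb⟩ := h4 e
      refine ⟨?_, ?_⟩
      · have : (-gp) e * ap e = gp e * (-ap e) := by simp only [Pi.neg_apply]; ring
        rw [this]; exact ha
      · simpa [abs_neg] using hb
    · intro e
      obtain ⟨ha, hb⟩ := h5 e
      refine ⟨?_, ?_⟩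
      · have : (-gm) e * am e = gm e * (-am e) := by simp only [Pi.neg_apply]; ring
        rw [this]; exact ha
      · simpa [abs_neg] using hb
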